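/- The form φ_J is a calibration on ℝ⁸ = ℍ² whose contact set is the Grassmannian Gr(1;ℍ²) of quaternionic lines: for every orthonormal family e₁, e₂, e₃, e₄ in ℍ² one has φ_J(e₁,e₂,e₃,e₄) ≤ 1, and if φ_J(e₁,e₂,e₃,e₄) = 1 then the real span of e₁, e₂, e₃, e₄ is closed under J₁, J₂, J₃, i.e. it is a quaternionic line in ℍ². -/

import Mathlib

open RealInnerProductSpace

/-- The imaginary units of the quaternions. -/
def quatUnit : Fin 3 → Quaternion ℝ :=
  ![⟨0, 1, 0, 0⟩, ⟨0, 0, 1, 0⟩, ⟨0, 0, 0, 1⟩]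

/-- The real inner product on ℍ², `⟪u,v⟫ = Re(ū₁v₁) + Re(ū₂v₂)`. -/
noncomputable def innerH2 (u v : Quaternion ℝ × Quaternion ℝ) : ℝ :=
  ⟪u.1, v.1⟫ + ⟪u.2, v.2⟫

/-- The hypercomplex structure on ℍ² given by componentwise right quaternionic
multiplication, `J_r(u₁,u₂) = (-u₁ e_r, -u₂ e_r)`. -/
noncomputable def Jact (r : Fin 3) (u : Quaternion ℝ × Quaternion ℝ) : Quaternion ℝ × Quaternion ℝ :=
  (-(u.1 * quatUnit r), -(u.2 * quatUnit r))

/-- The Kähler two-forms `ω_r(u,v) = ⟪J_r u, v⟫` on ℍ². -/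
noncomputable def omegaJ (r : Fin 3) (u v : Quaternion ℝ × Quaternion ℝ) : ℝ :=
  innerH2 (Jact r u) v

/-- The quaternionic calibration form `φ_J = (1/3) Σ_r ω_{J_r} ∧ ω_{J_r}`,
evaluated on four vectors. -/
noncomputable def phiJ (e₁ e₂ e₃ e₄ : Quaternion ℝ × Quaternion ℝ) : ℝ :=
  (1 / 3) * ∑ r : Fin 3,
    (omegaJ r e₁ e₂ * omegaJ r e₃ e₄ - omegaJ r e₁ e₃ * omegaJ r e₂ e₄ +
      omegaJ r e₁ e₄ * omegaJ r e₂ e₃)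

noncomputable def hH (u v : Quaternion ℝ × Quaternion ℝ) : Quaternion ℝ :=
  star u.1 * v.1 + star u.2 * v.2

lemma innerQ (a b : Quaternion ℝ) :
    ⟪a,b⟫ = a.re*b.re + a.imI*b.imI + a.imJ*b.imJ + a.imK*b.imK := by
  rw [Quaternion.inner_def]; simp [Quaternion.re_mul]

lemma innerH2_eq_re (u v : Quaternion ℝ × Quaternion ℝ) : innerH2 u v = (hH u v).re := by
  simp [innerH2, hH, innerQ, Quaternion.re_mul]

lemma sum_omega (u v w x : Quaternion ℝ × Quaternion ℝ) :
    ∑ r : Fin 3, omegaJ r u v * omegaJ r w x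
      = ⟪hH u v, hH w x⟫ - (hH u v).re * (hH w x).re := by
  simp [Fin.sum_univ_three, omegaJ, innerH2, Jact, hH, quatUnit, innerQ,
    Quaternion.re_mul, Quaternion.imI_mul, Quaternion.imJ_mul, Quaternion.imK_mul]
  ring

lemma innerH2_self (u : Quaternion ℝ × Quaternion ℝ) :
    innerH2 u u = ‖u.1‖^2 + ‖u.2‖^2 := by
  simp [innerH2, real_inner_self_eq_norm_sq]

lemma hH_norm_le (u v : Quaternion ℝ × Quaternion ℝ)
    (hu : innerH2 u u = 1) (hv : innerH2 v v = 1) : ‖hH u v‖ ≤ 1 := by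
  rw [innerH2_self] at hu hv
  calc ‖hH u v‖ ≤ ‖star u.1 * v.1‖ + ‖star u.2 * v.2‖ := norm_add_le _ _
    _ = ‖u.1‖*‖v.1‖ + ‖u.2‖*‖v.2‖ := by simp [norm_mul]
    _ ≤ 1 := by nlinarith [norm_nonneg u.1, norm_nonneg u.2, norm_nonneg v.1, norm_nonneg v.2,
        sq_nonneg (‖u.1‖*‖v.2‖ - ‖u.2‖*‖v.1‖)]

lemma inner_mul_left_quat (a p b : Quaternion ℝ) : ⟪a*p, b⟫ = ⟪p, star a * b⟫ := by
  simp [innerQ, Quaternion.re_mul, Quaternion.imI_mul, Quaternion.imJ_mul, Quaternion.imK_mul]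
  ring

lemma inner_mul_mul_quat (a p q : Quaternion ℝ) : ⟪a*p, a*q⟫ = ‖a‖^2 * ⟪p,q⟫ := by
  rw [inner_mul_left_quat, ← mul_assoc, Quaternion.star_mul_self,
    Quaternion.coe_mul_eq_smul, real_inner_smul_right, Quaternion.normSq_eq_norm_mul_self]
  ring

lemma align (u v : Quaternion ℝ × Quaternion ℝ)
    (hu : innerH2 u u = 1) (hv : innerH2 v v = 1) (hn : ‖hH u v‖ = 1) :
    v.1 = u.1 * hH u v ∧ v.2 = u.2 * hH u v := by
  set q := hH u v with hq
  have hq2 : ⟪q, q⟫ = 1 := by rw [real_inner_self_eq_norm_sq, hn]; norm_num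
  have hcross : ⟪u.1*q, v.1⟫ + ⟪u.2*q, v.2⟫ = 1 := by
    rw [inner_mul_left_quat, inner_mul_left_quat, ← inner_add_right]
    exact hq ▸ hq2
  have h1 : ‖v.1 - u.1*q‖^2 + ‖v.2 - u.2*q‖^2 = 0 := by
    rw [norm_sub_sq_real, norm_sub_sq_real]
    have e1 : ‖u.1*q‖^2 = ‖u.1‖^2*‖q‖^2 := by rw [norm_mul]; ring
    have e2 : ‖u.2*q‖^2 = ‖u.2‖^2*‖q‖^2 := by rw [norm_mul]; ring
    rw [innerH2_self] at hu hv
    have c1 : ⟪v.1, u.1*q⟫ = ⟪u.1*q, v.1⟫ := real_inner_comm _ _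
    have c2 : ⟪v.2, u.2*q⟫ = ⟪u.2*q, v.2⟫ := real_inner_comm _ _
    rw [e1, e2, c1, c2, hn]
    nlinarith [hcross]
  constructor
  · have : ‖v.1 - u.1*q‖ = 0 := by nlinarith [norm_nonneg (v.1 - u.1*q), norm_nonneg (v.2 - u.2*q), sq_nonneg ‖v.1 - u.1*q‖, sq_nonneg ‖v.2 - u.2*q‖]
    rwa [norm_eq_zero, sub_eq_zero] at this
  · have : ‖v.2 - u.2*q‖ = 0 := by nlinarith [norm_nonneg (v.1 - u.1*q), norm_nonneg (v.2 - u.2*q)]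
    rwa [norm_eq_zero, sub_eq_zero] at this

/-- Right multiplication embedding of ℍ into ℍ² along a fixed vector `w`. -/
noncomputable def Lmap (w : Quaternion ℝ × Quaternion ℝ) : Quaternion ℝ →ₗ[ℝ] Quaternion ℝ × Quaternion ℝ where
  toFun p := (w.1 * p, w.2 * p)
  map_add' p q := by simp [mul_add, Prod.ext_iff]
  map_smul' r p := by simp [Algebra.mul_smul_comm, Prod.ext_iff]

/-- `φ_J` is a calibration on `ℝ⁸ = ℍ²` whose contact set is the
Grassmannian of quaternionic lines: for every orthonormal family
`e₁,e₂,e₃,e₄` in ℍ² one has `φ_J(e₁,e₂,e₃,e₄) ≤ 1`, and if equality holds then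
the real span of `e₁,e₂,e₃,e₄` is closed under `J₁, J₂, J₃`, i.e. it is a
quaternionic line. -/
theorem phiJ_calibration_contact_set (e : Fin 4 → Quaternion ℝ × Quaternion ℝ)
    (he : ∀ a b : Fin 4, innerH2 (e a) (e b) = if a = b then 1 else 0) :
    phiJ (e 0) (e 1) (e 2) (e 3) ≤ 1 ∧
    (phiJ (e 0) (e 1) (e 2) (e 3) = 1 →
      ∀ v ∈ Submodule.span ℝ (Set.range e), ∀ r : Fin 3,
        Jact r v ∈ Submodule.span ℝ (Set.range e)) := by
  have hone : ∀ a, innerH2 (e a) (e a) = 1 := fun a => by simpa using he a a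
  have hzero : ∀ a b : Fin 4, a ≠ b → (hH (e a) (e b)).re = 0 := fun a b h => by
    rw [← innerH2_eq_re, he]; simp [h]
  set t1 := ⟪hH (e 0) (e 1), hH (e 2) (e 3)⟫ with ht1
  set t2 := ⟪hH (e 0) (e 2), hH (e 1) (e 3)⟫ with ht2
  set t3 := ⟪hH (e 0) (e 3), hH (e 1) (e 2)⟫ with ht3
  have S1 := sum_omega (e 0) (e 1) (e 2) (e 3)
  have S2 := sum_omega (e 0) (e 2) (e 1) (e 3)
  have S3 := sum_omega (e 0) (e 3) (e 1) (e 2)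
  rw [hzero 0 1 (by decide)] at S1
  rw [hzero 0 2 (by decide)] at S2
  rw [hzero 0 3 (by decide)] at S3
  have phi_eq : phiJ (e 0) (e 1) (e 2) (e 3) = (1/3) * (t1 - t2 + t3) := by
    simp only [phiJ, Fin.sum_univ_three] at S1 S2 S3 ⊢
    rw [ht1, ht2, ht3]
    linear_combination (1/3) * S1 - (1/3) * S2 + (1/3) * S3
  have hnle : ∀ a b : Fin 4, ‖hH (e a) (e b)‖ ≤ 1 :=
    fun a b => hH_norm_le _ _ (hone a) (hone b)
  have b1 : |t1| ≤ 1 := by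
    refine (abs_real_inner_le_norm _ _).trans ?_
    nlinarith [hnle 0 1, hnle 2 3, norm_nonneg (hH (e 0) (e 1)), norm_nonneg (hH (e 2) (e 3))]
  have b2 : |t2| ≤ 1 := by
    refine (abs_real_inner_le_norm _ _).trans ?_
    nlinarith [hnle 0 2, hnle 1 3, norm_nonneg (hH (e 0) (e 2)), norm_nonneg (hH (e 1) (e 3))]
  have b3 : |t3| ≤ 1 := by
    refine (abs_real_inner_le_norm _ _).trans ?_
    nlinarith [hnle 0 3, hnle 1 2, norm_nonneg (hH (e 0) (e 3)), norm_nonneg (hH (e 1) (e 2))]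
  rw [abs_le] at b1 b2 b3
  constructor
  · rw [phi_eq]; linarith
  · intro hphi
    rw [phi_eq] at hphi
    have e1 : t1 = 1 := by linarith
    have e2 : t2 = -1 := by linarith
    have e3 : t3 = 1 := by linarith
    have nrm : ∀ b : Fin 4, ∀ c d : Fin 4,
        |⟪hH (e 0) (e b), hH (e c) (e d)⟫| = 1 → ‖hH (e 0) (e b)‖ = 1 := by
      intro b c d habs
      refine le_antisymm (hnle 0 b) ?_
      have h2 := abs_real_inner_le_norm (hH (e 0) (e b)) (hH (e c) (e d))
      nlinarith [hnle c d, norm_nonneg (hH (e 0) (e b)), norm_nonneg (hH (e c) (e d))]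
    have n1 : ‖hH (e 0) (e 1)‖ = 1 := nrm 1 2 3 (by rw [← ht1, e1]; norm_num)
    have n2 : ‖hH (e 0) (e 2)‖ = 1 := nrm 2 1 3 (by rw [← ht2, e2]; norm_num)
    have n3 : ‖hH (e 0) (e 3)‖ = 1 := nrm 3 1 2 (by rw [← ht3, e3]; norm_num)
    have a1 := align (e 0) (e 1) (hone 0) (hone 1) n1
    have a2 := align (e 0) (e 2) (hone 0) (hone 2) n2
    have a3 := align (e 0) (e 3) (hone 0) (hone 3) n3
    set qf : Fin 4 → Quaternion ℝ :=
      ![1, hH (e 0) (e 1), hH (e 0) (e 2), hH (e 0) (e 3)] with hqf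
    have hLe : ∀ a : Fin 4, Lmap (e 0) (qf a) = e a := by
      intro a
      fin_cases a
      · simp [Lmap, hqf, Prod.ext_iff]
      · simp [Lmap, hqf, Prod.ext_iff]; exact ⟨a1.1.symm, a1.2.symm⟩
      · simp [Lmap, hqf, Prod.ext_iff]; exact ⟨a2.1.symm, a2.2.symm⟩
      · simp [Lmap, hqf, Prod.ext_iff]; exact ⟨a3.1.symm, a3.2.symm⟩
    have hinner : ∀ p p' : Quaternion ℝ, innerH2 (Lmap (e 0) p) (Lmap (e 0) p') = ⟪p, p'⟫ := by
      intro p p'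
      have h0 : ‖(e 0).1‖^2 + ‖(e 0).2‖^2 = 1 := by rw [← innerH2_self]; exact hone 0
      simp only [Lmap, LinearMap.coe_mk, AddHom.coe_mk, innerH2, inner_mul_mul_quat]
      linear_combination ⟪p, p'⟫ * h0
    have hON : Orthonormal ℝ qf := by
      rw [orthonormal_iff_ite]
      intro a b
      have := hinner (qf a) (qf b)
      rw [hLe, hLe, he] at this
      rw [← this]
    have hspan : Submodule.span ℝ (Set.range qf) = ⊤ :=
      hON.linearIndependent.span_eq_top_of_card_eq_finrank
        (by simp [Quaternion.finrank_eq_four])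
    have hLmem : ∀ p : Quaternion ℝ, Lmap (e 0) p ∈ Submodule.span ℝ (Set.range e) := by
      intro p
      have hp : p ∈ Submodule.span ℝ (Set.range qf) := hspan ▸ Submodule.mem_top
      have h2 := Submodule.mem_map_of_mem (f := Lmap (e 0)) hp
      rw [Submodule.map_span] at h2
      refine Submodule.span_le.mpr ?_ h2
      rintro _ ⟨_, ⟨a, rfl⟩, rfl⟩
      exact Submodule.subset_span ⟨a, (hLe a).symm⟩
    have hrange : ∀ v ∈ Submodule.span ℝ (Set.range e), ∃ p, Lmap (e 0) p = v := by
      intro v hv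
      have hle : Submodule.span ℝ (Set.range e) ≤ LinearMap.range (Lmap (e 0)) := by
        rw [Submodule.span_le]; rintro _ ⟨a, rfl⟩; exact ⟨qf a, hLe a⟩
      exact hle hv
    intro v hv r
    obtain ⟨p, rfl⟩ := hrange v hv
    have hJ : Jact r (Lmap (e 0) p) = Lmap (e 0) (-(p * quatUnit r)) := by
      simp [Jact, Lmap, mul_assoc]
    rw [hJ]
    exact hLmem _
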